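/- The coproduct Δ_list is a morphism of algebras for the shifted concatenation: for all lists u, v ∈ L, Δ_list(u ∗̄ v) = Δ_list(u) · Δ_list(v), where ∗̄ is extended bilinearly to k⟨L⟩ and the product on k⟨L⟩ ⊗_k k⟨L⟩ is the componentwise one, (a ⊗ b)·(c ⊗ d) = (a ∗̄ c) ⊗ (b ∗̄ d), extended bilinearly. -/

import Mathlib

open scoped TensorProduct

/-- A monomial: a nonzero finitely supported multi-index with support contained in `{1,2,…}`. -/
def Mon : Type := {m : ℕ →₀ ℕ // m ≠ 0 ∧ m 0 = 0}

namespace Mon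

/-- Product of monomials: pointwise addition of multi-indices. -/
noncomputable instance : Mul Mon :=
  ⟨fun a b =>
    ⟨a.1 + b.1, by
      constructor
      · intro h
        exact a.2.1 ((add_eq_zero.mp h).1)
      · simp [Finsupp.add_apply, a.2.2, b.2.2]⟩⟩

/-- The total degree (weight) of a monomial. -/
def w (m : Mon) : ℕ := m.1.sum fun _ v => v

/-- The set of variable indices occurring in a list of monomials. -/
def IndAlph (l : List Mon) : Finset ℕ := (l.map fun m => m.1.support).foldr (· ∪ ·) ∅

/-- The maximal variable index occurring in a list of monomials (`0` for the empty list). -/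
def maxInd (l : List Mon) : ℕ := (IndAlph l).sup id

/-- The embedding `i ↦ i + p` of `ℕ` into itself. -/
def addEmb (p : ℕ) : ℕ ↪ ℕ := ⟨fun i => i + p, fun a b h => by simpa using h⟩

/-- The shift `T_p` of a monomial: translate the support by `p`. -/
noncomputable def Tmon (p : ℕ) (m : Mon) : Mon :=
  ⟨m.1.embDomain (addEmb p), by
    refine ⟨fun h => m.2.1 (Finsupp.embDomain_eq_zero.mp h), ?_⟩
    by_cases hp : p = 0
    · subst hp
      have h0 : (Finsupp.embDomain (addEmb 0) m.1) ((addEmb 0) 0) = m.1 0 :=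
        Finsupp.embDomain_apply_self _ _ _
      simpa [addEmb] using h0.trans m.2.2
    · apply Finsupp.embDomain_notin_range
      rintro ⟨i, hi⟩
      simp only [addEmb, Function.Embedding.coeFn_mk] at hi
      change i + p = 0 at hi
      omega⟩

/-- Shifted concatenation of lists of monomials. -/
noncomputable def sconc (l₁ l₂ : List Mon) : List Mon := l₁ ++ l₂.map (Tmon (maxInd l₁))

/-- A list of monomials is compact when its alphabet has no holes:
`IndAlph l = {1,…,card (IndAlph l)}`. -/
def Compact (l : List Mon) : Prop := IndAlph l = Finset.Icc 1 (IndAlph l).card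

/-- The re-indexing function of a list `l` : on `IndAlph l` it is the unique strictly
increasing bijection onto `{1,…,card (IndAlph l)}` (extended injectively elsewhere). -/
noncomputable def phi (l : List Mon) (i : ℕ) : ℕ :=
  if h : i ∈ IndAlph l then
    (((IndAlph l).orderIsoOfFin rfl).symm ⟨i, h⟩ : Fin (IndAlph l).card) + 1
  else i + (IndAlph l).card + 1

lemma phi_pos (l : List Mon) (i : ℕ) : 1 ≤ phi l i := by
  unfold phi; split_ifs <;> omega

lemma phi_inj (l : List Mon) : Function.Injective (phi l) := by
  intro a b hab
  unfold phi at hab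
  split_ifs at hab with ha hb hb
  · have h1 : (((IndAlph l).orderIsoOfFin rfl).symm ⟨a, ha⟩) =
        (((IndAlph l).orderIsoOfFin rfl).symm ⟨b, hb⟩) := Fin.ext (by omega)
    have h2 := congrArg ((IndAlph l).orderIsoOfFin rfl) h1
    rw [OrderIso.apply_symm_apply, OrderIso.apply_symm_apply] at h2
    exact congrArg Subtype.val h2
  · have := (((IndAlph l).orderIsoOfFin rfl).symm ⟨a, ha⟩).isLt; omega
  · have := (((IndAlph l).orderIsoOfFin rfl).symm ⟨b, hb⟩).isLt; omega
  · omega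

/-- Action of the compacting operator of `l` on a single monomial. -/
noncomputable def cptMon (l : List Mon) (m : Mon) : Mon :=
  ⟨m.1.mapDomain (phi l), by
    constructor
    · intro h
      apply m.2.1
      exact Finsupp.mapDomain_injective (phi_inj l) (by simpa using h)
    · apply Finsupp.mapDomain_notin_range
      rintro ⟨i, hi⟩
      have := phi_pos l i
      omega⟩

/-- The compacting operator on lists of monomials. -/
noncomputable def cpt (l : List Mon) : List Mon := l.map (cptMon l)

/-- `sub l I` is the sublist of `l` consisting of the entries whose (1-based) position
belongs to `I`. -/
def sub (l : List Mon) (I : Finset ℕ) : List Mon :=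
  (List.range l.length).filterMap fun j => if j + 1 ∈ I then l[j]? else none

/-- `∗̄`-irreducible lists: nonempty and with no factorization into two nonempty lists. -/
def SIrred (l : List Mon) : Prop :=
  l ≠ [] ∧ ∀ u v : List Mon, l = sconc u v → u = [] ∨ v = []

end Mon

/-- The free `k`-module on the set of lists of monomials. -/
abbrev FreeL (k : Type*) [CommRing k] : Type _ := (List Mon) →₀ k

/-- The coproduct `Δ_list`, defined on a basis list `l` of length `n` by
`Δ_list l = Σ_{I ⊆ {1..n}} cpt (l[I]) ⊗ cpt (l[{1..n} \ I])`. -/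
noncomputable def deltaList (k : Type*) [CommRing k] :
    FreeL k →ₗ[k] TensorProduct k (FreeL k) (FreeL k) :=
  Finsupp.lift _ k _ fun l =>
    ∑ I ∈ (Finset.Icc 1 l.length).powerset,
      Finsupp.single (Mon.cpt (Mon.sub l I)) (1 : k) ⊗ₜ[k]
        Finsupp.single (Mon.cpt (Mon.sub l (Finset.Icc 1 l.length \ I))) (1 : k)

/-- The bilinear extension of the shifted concatenation to the free module. -/
noncomputable def sconcL (k : Type*) [CommRing k] : FreeL k →ₗ[k] FreeL k →ₗ[k] FreeL k :=
  Finsupp.lift _ k _ fun u => Finsupp.lift _ k _ fun v => Finsupp.single (Mon.sconc u v) (1 : k)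

open Classical in
/-- The counit: coefficient of the empty list. -/
noncomputable def epsL (k : Type*) [CommRing k] : FreeL k →ₗ[k] k :=
  Finsupp.lift _ k _ fun l => if l = ([] : List Mon) then (1 : k) else 0
namespace Mon

lemma mem_IndAlph {l : List Mon} {i : ℕ} :
    i ∈ IndAlph l ↔ ∃ m ∈ l, i ∈ m.1.support := by
  induction l with
  | nil => simp [IndAlph]
  | cons a t ih =>
      simp only [IndAlph, List.map_cons, List.foldr_cons, Finset.mem_union, List.mem_cons]
      rw [show ((t.map fun m => m.1.support).foldr (· ∪ ·) ∅ : Finset ℕ) = IndAlph t from rfl]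
      rw [ih]
      constructor
      · rintro (h | ⟨m, hm, hi⟩)
        · exact ⟨a, Or.inl rfl, h⟩
        · exact ⟨m, Or.inr hm, hi⟩
      · rintro ⟨m, (rfl | hm), hi⟩
        · exact Or.inl hi
        · exact Or.inr ⟨m, hm, hi⟩

lemma one_le_of_mem_IndAlph {l : List Mon} {i : ℕ} (h : i ∈ IndAlph l) : 1 ≤ i := by
  rcases mem_IndAlph.mp h with ⟨m, _, hi⟩
  rcases Nat.eq_zero_or_pos i with rfl | h1
  · exact absurd (Finsupp.mem_support_iff.mp hi) (by simp [m.2.2])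
  · exact h1

lemma le_maxInd_of_mem {l : List Mon} {i : ℕ} (h : i ∈ IndAlph l) : i ≤ maxInd l :=
  Finset.le_sup (f := id) h

lemma IndAlph_subset {l l' : List Mon} (h : ∀ m ∈ l, m ∈ l') :
    IndAlph l ⊆ IndAlph l' := by
  intro i hi
  rcases mem_IndAlph.mp hi with ⟨m, hm, hms⟩
  exact mem_IndAlph.mpr ⟨m, h m hm, hms⟩

lemma support_subset_IndAlph {l : List Mon} {m : Mon} (h : m ∈ l) :
    m.1.support ⊆ IndAlph l := fun i hi => mem_IndAlph.mpr ⟨m, h, hi⟩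

lemma IndAlph_append (a b : List Mon) :
    IndAlph (a ++ b) = IndAlph a ∪ IndAlph b := by
  ext i
  simp only [mem_IndAlph, Finset.mem_union, List.mem_append]
  constructor
  · rintro ⟨m, (h | h), hi⟩
    exacts [Or.inl ⟨m, h, hi⟩, Or.inr ⟨m, h, hi⟩]
  · rintro (⟨m, h, hi⟩ | ⟨m, h, hi⟩)
    exacts [⟨m, Or.inl h, hi⟩, ⟨m, Or.inr h, hi⟩]

lemma IndAlph_map_Tmon (p : ℕ) (b : List Mon) :
    IndAlph (b.map (Tmon p)) = (IndAlph b).map (addEmb p) := by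
  ext i
  simp only [mem_IndAlph, List.mem_map, Finset.mem_map]
  constructor
  · rintro ⟨_, ⟨m, hm, rfl⟩, hi⟩
    rw [Tmon] at hi
    simp only [Finsupp.support_embDomain, Finset.mem_map] at hi
    rcases hi with ⟨j, hj, rfl⟩
    exact ⟨j, ⟨m, hm, hj⟩, rfl⟩
  · rintro ⟨j, ⟨m, hm, hms⟩, rfl⟩
    exact ⟨Tmon p m, ⟨m, hm, rfl⟩, by
      rw [Tmon]; simp only [Finsupp.support_embDomain, Finset.mem_map]
      exact ⟨j, hms, rfl⟩⟩

end Mon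
namespace Mon

lemma phi_apply_mem {l : List Mon} {i : ℕ} (h : i ∈ IndAlph l) :
    phi l i ∈ Finset.Icc 1 (IndAlph l).card := by
  rw [phi, dif_pos h]
  have := (((IndAlph l).orderIsoOfFin rfl).symm ⟨i, h⟩).isLt
  simp only [Finset.mem_Icc]
  omega

lemma phi_strictMonoOn {l : List Mon} {i j : ℕ} (hi : i ∈ IndAlph l)
    (hj : j ∈ IndAlph l) (hij : i < j) : phi l i < phi l j := by
  rw [phi, dif_pos hi, phi, dif_pos hj]
  have : (⟨i, hi⟩ : {x // x ∈ IndAlph l}) < ⟨j, hj⟩ := by exact hij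
  have h2 := ((IndAlph l).orderIsoOfFin rfl).symm.strictMono this
  simpa using Nat.add_lt_add_right h2 1

/-- uniqueness of strictly monotone maps between finsets of the same cardinality -/
lemma strictMono_eq_on {s t : Finset ℕ} (h : s.card = t.card) {f g : ℕ → ℕ}
    (hf : ∀ i ∈ s, f i ∈ t) (hg : ∀ i ∈ s, g i ∈ t)
    (hfm : ∀ i ∈ s, ∀ j ∈ s, i < j → f i < f j)
    (hgm : ∀ i ∈ s, ∀ j ∈ s, i < j → g i < g j)
    {i : ℕ} (hi : i ∈ s) : f i = g i := by
  have hrange := Finset.range_orderEmbOfFin s rfl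
  have hF : (fun x : Fin t.card => f (s.orderEmbOfFin (h.trans rfl) x)) =
      t.orderEmbOfFin rfl := by
    apply Finset.orderEmbOfFin_unique
    · intro x; exact hf _ (Finset.orderEmbOfFin_mem s _ _)
    · intro x y hxy
      exact hfm _ (Finset.orderEmbOfFin_mem s _ _) _ (Finset.orderEmbOfFin_mem s _ _)
        ((s.orderEmbOfFin (h.trans rfl)).strictMono hxy)
  have hG : (fun x : Fin t.card => g (s.orderEmbOfFin (h.trans rfl) x)) =
      t.orderEmbOfFin rfl := by
    apply Finset.orderEmbOfFin_unique
    · intro x; exact hg _ (Finset.orderEmbOfFin_mem s _ _)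
    · intro x y hxy
      exact hgm _ (Finset.orderEmbOfFin_mem s _ _) _ (Finset.orderEmbOfFin_mem s _ _)
        ((s.orderEmbOfFin (h.trans rfl)).strictMono hxy)
  obtain ⟨x, hx⟩ : ∃ x, s.orderEmbOfFin (h.trans rfl) x = i := by
    have : i ∈ Set.range (s.orderEmbOfFin (h.trans rfl)) := by
      rw [Finset.range_orderEmbOfFin]; exact hi
    exact this
  rw [← hx]
  exact (congrFun hF x).trans (congrFun hG x).symm

lemma phi_image (l : List Mon) :
    (IndAlph l).image (phi l) = Finset.Icc 1 (IndAlph l).card := by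
  apply Finset.eq_of_subset_of_card_le
  · intro x hx
    rcases Finset.mem_image.mp hx with ⟨i, hi, rfl⟩
    exact phi_apply_mem hi
  · rw [Nat.card_Icc]
    rw [Finset.card_image_of_injective _ (phi_inj l)]
    omega

lemma IndAlph_cpt (l : List Mon) :
    IndAlph (cpt l) = Finset.Icc 1 (IndAlph l).card := by
  rw [← phi_image]
  ext i
  simp only [mem_IndAlph, cpt, List.mem_map, Finset.mem_image]
  constructor
  · rintro ⟨_, ⟨m, hm, rfl⟩, hi⟩
    rw [cptMon] at hi
    simp only [Finsupp.mapDomain_support_of_injective (phi_inj l), Finset.mem_image] at hi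
    rcases hi with ⟨j, hj, rfl⟩
    exact ⟨j, ⟨m, hm, hj⟩, rfl⟩
  · rintro ⟨j, ⟨m, hm, hms⟩, rfl⟩
    refine ⟨cptMon l m, ⟨m, hm, rfl⟩, ?_⟩
    rw [cptMon]
    simp only [Finsupp.mapDomain_support_of_injective (phi_inj l), Finset.mem_image]
    exact ⟨j, hms, rfl⟩

lemma maxInd_cpt (l : List Mon) : maxInd (cpt l) = (IndAlph l).card := by
  rw [maxInd, IndAlph_cpt]
  rcases Nat.eq_zero_or_pos (IndAlph l).card with h | h
  · simp [h]
  · apply le_antisymm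
    · exact Finset.sup_le fun i hi => (Finset.mem_Icc.mp hi).2
    · exact Finset.le_sup (f := id) (Finset.mem_Icc.mpr ⟨h, le_rfl⟩)

end Mon
namespace Mon

lemma cpt_append (a b : List Mon) (p : ℕ) (hp : ∀ i ∈ IndAlph a, i ≤ p) :
    cpt (a ++ b.map (Tmon p)) = sconc (cpt a) (cpt b) := by
  set c := a ++ b.map (Tmon p) with hc
  set na := (IndAlph a).card with hna
  set nb := (IndAlph b).card with hnb
  have hs : IndAlph c = IndAlph a ∪ (IndAlph b).map (addEmb p) := by
    rw [hc, IndAlph_append, IndAlph_map_Tmon]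
  have hdisj : Disjoint (IndAlph a) ((IndAlph b).map (addEmb p)) := by
    rw [Finset.disjoint_left]
    intro i hi hih
    rcases Finset.mem_map.mp hih with ⟨j, hj, hji⟩
    have h1 := one_le_of_mem_IndAlph hj
    have h2 := hp i hi
    simp only [addEmb, Function.Embedding.coeFn_mk] at hji
    change j + p = i at hji
    omega
  have hcard : (IndAlph c).card = na + nb := by
    rw [hs, Finset.card_union_of_disjoint hdisj, Finset.card_map]
  have hmem_iff : ∀ i, i ∈ IndAlph c ↔ i ∈ IndAlph a ∨ ∃ j ∈ IndAlph b, i = j + p := by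
    intro i
    rw [hs, Finset.mem_union]
    simp only [Finset.mem_map, addEmb, Function.Embedding.coeFn_mk]
    constructor
    · rintro (h | ⟨j, hj, rfl⟩)
      exacts [Or.inl h, Or.inr ⟨j, hj, rfl⟩]
    · rintro (h | ⟨j, hj, rfl⟩)
      exacts [Or.inl h, Or.inr ⟨j, hj, rfl⟩]
  set g : ℕ → ℕ := fun i => if i ≤ p then phi a i else phi b (i - p) + na with hg
  have key : ∀ i ∈ IndAlph c, phi c i = g i := by
    intro i hi
    refine strictMono_eq_on (t := Finset.Icc 1 (na + nb)) ?_ ?_ ?_ ?_ ?_ hi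
    · rw [hcard, Nat.card_Icc]; omega
    · intro x hx
      have := phi_apply_mem hx
      rwa [hcard] at this
    · intro x hx
      rcases (hmem_iff x).mp hx with h | ⟨j, hj, rfl⟩
      · rw [hg]
        simp only [if_pos (hp x h)]
        have := phi_apply_mem h
        simp only [Finset.mem_Icc] at this ⊢
        omega
      · have h1 := one_le_of_mem_IndAlph hj
        rw [hg]
        simp only [if_neg (by omega : ¬ j + p ≤ p), Nat.add_sub_cancel]
        have := phi_apply_mem hj
        simp only [Finset.mem_Icc] at this ⊢
        omega
    · intro x hx y hy hxy
      exact phi_strictMonoOn hx hy hxy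
    · intro x hx y hy hxy
      rcases (hmem_iff x).mp hx with h | ⟨j, hj, rfl⟩ <;>
        rcases (hmem_iff y).mp hy with h' | ⟨j', hj', rfl⟩
      · rw [hg]
        simp only [if_pos (hp x h), if_pos (hp y h')]
        exact phi_strictMonoOn h h' hxy
      · have h1 := one_le_of_mem_IndAlph hj'
        rw [hg]
        simp only [if_pos (hp x h), if_neg (by omega : ¬ j' + p ≤ p), Nat.add_sub_cancel]
        have h3 := phi_apply_mem h
        have h4 := phi_apply_mem hj'
        simp only [Finset.mem_Icc] at h3 h4
        omega
      · have := hp y h'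
        have h1 := one_le_of_mem_IndAlph hj
        omega
      · have h1 := one_le_of_mem_IndAlph hj
        have h2 := one_le_of_mem_IndAlph hj'
        rw [hg]
        simp only [if_neg (by omega : ¬ j + p ≤ p), if_neg (by omega : ¬ j' + p ≤ p),
          Nat.add_sub_cancel]
        have := phi_strictMonoOn hj hj' (by omega : j < j')
        omega
  have keyA : ∀ i ∈ IndAlph a, phi c i = phi a i := by
    intro i hi
    rw [key i ((hmem_iff i).mpr (Or.inl hi)), hg]
    simp [hp i hi]
  have keyB : ∀ j ∈ IndAlph b, phi c (j + p) = phi b j + na := by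
    intro j hj
    have h1 := one_le_of_mem_IndAlph hj
    rw [key _ ((hmem_iff _).mpr (Or.inr ⟨j, hj, rfl⟩)), hg]
    simp only [if_neg (by omega : ¬ j + p ≤ p), Nat.add_sub_cancel]
  have ea : ∀ m ∈ a, cptMon c m = cptMon a m := by
    intro m hm
    apply Subtype.ext
    exact Finsupp.mapDomain_congr fun i hi => keyA i (support_subset_IndAlph hm hi)
  have eb : ∀ m ∈ b, cptMon c (Tmon p m) = Tmon na (cptMon b m) := by
    intro m hm
    apply Subtype.ext
    show Finsupp.mapDomain (phi c) ((Tmon p m).1) =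
      Finsupp.embDomain (addEmb na) ((cptMon b m).1)
    rw [show (Tmon p m).1 = Finsupp.embDomain (addEmb p) m.1 from rfl,
      show (cptMon b m).1 = Finsupp.mapDomain (phi b) m.1 from rfl,
      Finsupp.embDomain_eq_mapDomain, Finsupp.embDomain_eq_mapDomain,
      ← Finsupp.mapDomain_comp, ← Finsupp.mapDomain_comp]
    apply Finsupp.mapDomain_congr
    intro i hi
    have := keyB i (support_subset_IndAlph hm hi)
    simp only [Function.comp_apply, addEmb, Function.Embedding.coeFn_mk]
    exact this
  show cpt c = cpt a ++ (cpt b).map (Tmon (maxInd (cpt a)))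
  rw [maxInd_cpt]
  rw [cpt, hc, List.map_append, List.map_map]
  congr 1
  · exact List.map_congr_left ea
  · rw [cpt, List.map_map]
    exact List.map_congr_left fun m hm => eb m hm

end Mon
namespace Mon

lemma mem_sub {l : List Mon} {I : Finset ℕ} {m : Mon} (h : m ∈ sub l I) : m ∈ l := by
  rw [sub] at h
  rcases List.mem_filterMap.mp h with ⟨j, _, hj⟩
  split_ifs at hj
  exact List.mem_of_getElem? hj

lemma sub_map (l : List Mon) (f : Mon → Mon) (I : Finset ℕ) :
    sub (l.map f) I = (sub l I).map f := by
  rw [sub, sub, List.length_map, List.map_filterMap]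
  apply List.filterMap_congr
  intro j _
  by_cases h : j + 1 ∈ I <;> simp [h, List.getElem?_map]

lemma sub_inter_Icc (l : List Mon) (I : Finset ℕ) :
    sub l (I ∩ Finset.Icc 1 l.length) = sub l I := by
  rw [sub, sub]
  apply List.filterMap_congr
  intro j hj
  rw [List.mem_range] at hj
  have : j + 1 ∈ I ∩ Finset.Icc 1 l.length ↔ j + 1 ∈ I := by
    simp only [Finset.mem_inter, Finset.mem_Icc]
    exact ⟨fun h => h.1, fun h => ⟨h, by omega⟩⟩
  by_cases h : j + 1 ∈ I
  · rw [if_pos h, if_pos (this.mpr h)]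
  · rw [if_neg h, if_neg (fun hh => h (this.mp hh))]

lemma sub_append (a b : List Mon) (I : Finset ℕ) :
    sub (a ++ b) I =
      sub a I ++ sub b ((I.filter (a.length < ·)).image (· - a.length)) := by
  rw [sub, sub, sub, List.length_append, List.range_add, List.filterMap_append]
  congr 1
  · apply List.filterMap_congr
    intro j hj
    rw [List.mem_range] at hj
    rw [List.getElem?_append_left hj]
  · rw [List.filterMap_map]
    apply List.filterMap_congr
    intro j hj
    rw [List.mem_range] at hj
    simp only [Function.comp_apply]
    rw [List.getElem?_append_right (by omega)]
    have : a.length + j + 1 ∈ I ↔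
        j + 1 ∈ (I.filter (a.length < ·)).image (· - a.length) := by
      simp only [Finset.mem_image, Finset.mem_filter]
      constructor
      · intro h
        exact ⟨a.length + j + 1, ⟨h, by omega⟩, by omega⟩
      · rintro ⟨y, ⟨hy, hy2⟩, hy3⟩
        have : y = a.length + j + 1 := by omega
        rwa [← this]
    simp only [Nat.add_sub_cancel_left, show a.length + j - a.length = j from by omega]
    by_cases h : a.length + j + 1 ∈ I
    · rw [if_pos h, if_pos (this.mp h)]
    · rw [if_neg h, if_neg (fun hh => h (this.mpr hh))]

end Mon
namespace Mon

lemma term_eq (u v : List Mon) (J : Finset ℕ) :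
    cpt (sub (sconc u v) J) =
      sconc (cpt (sub u (J ∩ Finset.Icc 1 u.length)))
        (cpt (sub v ((J.filter (u.length < ·)).image (· - u.length)))) := by
  rw [sub_inter_Icc, sconc, sub_append, sub_map]
  exact cpt_append _ _ (maxInd u) fun i hi =>
    le_maxInd_of_mem (IndAlph_subset (fun m hm => mem_sub hm) hi)

lemma length_sconc (u v : List Mon) : (sconc u v).length = u.length + v.length := by
  simp [sconc]

lemma compl_inter (n m : ℕ) (J : Finset ℕ) :
    (Finset.Icc 1 (n + m) \ J) ∩ Finset.Icc 1 n =
      Finset.Icc 1 n \ (J ∩ Finset.Icc 1 n) := by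
  ext x
  simp only [Finset.mem_inter, Finset.mem_sdiff, Finset.mem_Icc]
  by_cases h : x ∈ J <;> simp [h] <;> omega

lemma compl_image (n m : ℕ) (J : Finset ℕ) (hJ : J ⊆ Finset.Icc 1 (n + m)) :
    ((Finset.Icc 1 (n + m) \ J).filter (n < ·)).image (· - n) =
      Finset.Icc 1 m \ (J.filter (n < ·)).image (· - n) := by
  ext x
  simp only [Finset.mem_image, Finset.mem_filter, Finset.mem_sdiff, Finset.mem_Icc]
  constructor
  · rintro ⟨y, ⟨⟨⟨hy1, hy2⟩, hyJ⟩, hny⟩, rfl⟩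
    refine ⟨⟨by omega, by omega⟩, ?_⟩
    rintro ⟨y', ⟨hy'J, hny'⟩, hxy'⟩
    have : y' = y := by omega
    exact hyJ (this ▸ hy'J)
  · rintro ⟨⟨hx1, hx2⟩, hnot⟩
    exact ⟨x + n, ⟨⟨⟨by omega, by omega⟩,
      fun hmem => hnot ⟨x + n, ⟨hmem, by omega⟩, by omega⟩⟩, by omega⟩, by omega⟩

end Mon
lemma lift_single {k : Type*} [CommRing k] {M : Type*} [AddCommMonoid M] [Module k M]
    (f : List Mon → M) (l : List Mon) :
    Finsupp.lift M k (List Mon) f (Finsupp.single l 1) = f l := by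
  rw [Finsupp.lift_apply, Finsupp.sum_single_index (by simp), one_smul]

lemma deltaList_single {k : Type*} [CommRing k] (l : List Mon) :
    deltaList k (Finsupp.single l 1) =
      ∑ I ∈ (Finset.Icc 1 l.length).powerset,
        Finsupp.single (Mon.cpt (Mon.sub l I)) (1 : k) ⊗ₜ[k]
          Finsupp.single (Mon.cpt (Mon.sub l (Finset.Icc 1 l.length \ I))) (1 : k) := by
  rw [deltaList, lift_single]

lemma sconcL_single {k : Type*} [CommRing k] (u v : List Mon) :
    sconcL k (Finsupp.single u 1) (Finsupp.single v 1) =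
      Finsupp.single (Mon.sconc u v) (1 : k) := by
  rw [sconcL, lift_single, lift_single]
/-- ** Statement 9 **: the coproduct is a morphism for the shifted concatenation,
the product on the tensor square being the componentwise one. -/
theorem deltaList_mul (k : Type*) [CommRing k] (u v : List Mon) :
    deltaList k (Finsupp.single (Mon.sconc u v) 1) =
      (TensorProduct.homTensorHomMap (RingHom.id k) (FreeL k) (FreeL k) (FreeL k) (FreeL k))
        ((TensorProduct.map (sconcL k) (sconcL k)) (deltaList k (Finsupp.single u 1)))
        (deltaList k (Finsupp.single v 1)) := by
  rw [deltaList_single, deltaList_single, deltaList_single]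
  simp only [map_sum, LinearMap.sum_apply, TensorProduct.map_tmul,
    TensorProduct.homTensorHomMap_apply, sconcL_single, Mon.length_sconc]
  rw [Finset.sum_comm]
  rw [← Finset.sum_product']
  refine Finset.sum_bij'
    (fun J _ => (J ∩ Finset.Icc 1 u.length, (J.filter (u.length < ·)).image (· - u.length)))
    (fun P _ => P.1 ∪ P.2.image (· + u.length)) ?_ ?_ ?_ ?_ ?_
  · -- hi
    intro J hJ
    rw [Finset.mem_powerset] at hJ
    rw [Finset.mem_product]
    constructor
    · rw [Finset.mem_powerset]
      exact Finset.inter_subset_right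
    · rw [Finset.mem_powerset]
      intro x hx
      simp only [Finset.mem_image, Finset.mem_filter] at hx
      rcases hx with ⟨y, ⟨hy, hny⟩, rfl⟩
      have := hJ hy
      rw [Finset.mem_Icc] at this ⊢
      omega
  · -- hj
    rintro ⟨I1, I2⟩ hP
    rw [Finset.mem_product, Finset.mem_powerset, Finset.mem_powerset] at hP
    rw [Finset.mem_powerset]
    intro x hx
    rcases Finset.mem_union.mp hx with h | h
    · have := hP.1 h
      rw [Finset.mem_Icc] at this ⊢
      omega
    · rcases Finset.mem_image.mp h with ⟨z, hz, rfl⟩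
      have := hP.2 hz
      rw [Finset.mem_Icc] at this ⊢
      omega
  · -- left inverse
    intro J hJ
    rw [Finset.mem_powerset] at hJ
    ext x
    simp only [Finset.mem_union, Finset.mem_inter, Finset.mem_image, Finset.mem_filter,
      Finset.mem_Icc]
    constructor
    · rintro (⟨h, _⟩ | ⟨z, ⟨y, ⟨hy, hny⟩, rfl⟩, rfl⟩)
      · exact h
      · rwa [show y - u.length + u.length = y from by omega]
    · intro hx
      have hx2 := hJ hx
      rw [Finset.mem_Icc] at hx2
      by_cases h : x ≤ u.length
      · exact Or.inl ⟨hx, by omega, h⟩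
      · exact Or.inr ⟨x - u.length, ⟨x, ⟨hx, by omega⟩, rfl⟩, by omega⟩
  · -- right inverse
    rintro ⟨I1, I2⟩ hP
    rw [Finset.mem_product, Finset.mem_powerset, Finset.mem_powerset] at hP
    have h1 : (I1 ∪ I2.image (· + u.length)) ∩ Finset.Icc 1 u.length = I1 := by
      ext x
      simp only [Finset.mem_inter, Finset.mem_union, Finset.mem_image, Finset.mem_Icc]
      constructor
      · rintro ⟨h | ⟨z, hz, rfl⟩, h2⟩
        · exact h
        · have := hP.2 hz
          rw [Finset.mem_Icc] at this
          exact absurd h2.2 (by omega)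
      · intro h
        have := hP.1 h
        rw [Finset.mem_Icc] at this
        exact ⟨Or.inl h, this⟩
    have h2 : ((I1 ∪ I2.image (· + u.length)).filter (u.length < ·)).image (· - u.length)
        = I2 := by
      ext x
      simp only [Finset.mem_image, Finset.mem_filter, Finset.mem_union]
      constructor
      · rintro ⟨y, ⟨hy | ⟨z, hz, rfl⟩, hny⟩, rfl⟩
        · have := hP.1 hy
          rw [Finset.mem_Icc] at this
          exact absurd hny (by omega)
        · rwa [show z + u.length - u.length = z from by omega]
      · intro hx
        have := hP.2 hx
        rw [Finset.mem_Icc] at this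
        exact ⟨x + u.length, ⟨Or.inr ⟨x, hx, rfl⟩, by omega⟩, by omega⟩
    exact Prod.ext h1 h2
  · -- value equality
    intro J hJ
    rw [Finset.mem_powerset] at hJ
    rw [Mon.term_eq, Mon.term_eq, Mon.compl_inter u.length v.length J,
      Mon.compl_image u.length v.length J hJ]
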